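/- With Δ_s as above, the function χ_{∂B} ≡ 1 satisfies Δ_s 1 = 0, and for distinct edges ε, ε' from the root, the function (1/μ[ε]) χ_ε − (1/μ[ε']) χ_{ε'} is an eigenvector of Δ_s with eigenvalue λ_0 = −1/G_s(root); the span of these functions has dimension n_0 − 1, where n_0 is the number of edges from the root. -/

import Mathlib

/-- the constant function `1 = χ_{∂B}` satisfies `Δ_s 1 = 0`,
and for distinct root edges `ε ≠ ε'` the function
`(1/μ[ε]) χ_ε − (1/μ[ε']) χ_{ε'}` is an eigenvector of `Δ_s` with eigenvalue
`λ₀ = −1/G_s(root)`; the span of these has dimension `n₀ − 1` where `n₀` is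
the number of root edges. Setting as in Statement 9, with `root` the empty
path (`len root = 0`, `χ root = χ_{∂B}`, `μ root = 1`). -/
theorem stmt_10 (P : Type*) (M : Type*) [AddCommGroup M] [Module ℝ M]
    (len : P → ℕ) (par : P → P) (children : P → Finset P)
    (trunc : P → ℕ → P)
    (htrunc : ∀ (γ : P) (k : ℕ), trunc γ k = par^[len γ - k] γ)
    (hchild : ∀ γ c : P, c ∈ children γ → par c = γ ∧ len c = len γ + 1)
    (μ G : P → ℝ) (hμ : ∀ γ, 0 < μ γ) (hG : ∀ γ, 0 < G γ)
    (χ : P → M)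
    (hind : ∀ γ : P, LinearIndependent ℝ (fun c : (children γ : Finset P) => χ (c : P)))
    (Δ : M →ₗ[ℝ] M)
    (hΔ : ∀ γ : P, Δ (χ γ) = -∑ k ∈ Finset.range (len γ),
      (G (trunc γ k))⁻¹ •
        ((μ (trunc γ k) - μ (trunc γ (k + 1))) • χ γ -
          μ γ • (χ (trunc γ k) - χ (trunc γ (k + 1)))))
    (root : P) (hrootlen : len root = 0) (hμroot : μ root = 1) :
    Δ (χ root) = 0 ∧
    (∀ ε ∈ children root, ∀ ε' ∈ children root,
      Δ ((μ ε)⁻¹ • χ ε - (μ ε')⁻¹ • χ ε') =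
        (-(G root)⁻¹) • ((μ ε)⁻¹ • χ ε - (μ ε')⁻¹ • χ ε')) ∧
    Module.finrank ℝ (Submodule.span ℝ
      {v : M | ∃ ε ∈ children root, ∃ ε' ∈ children root,
        ε ≠ ε' ∧ v = (μ ε)⁻¹ • χ ε - (μ ε')⁻¹ • χ ε'}) =
      (children root).card - 1 := by
  classical
  have h1 : Δ (χ root) = 0 := by
    rw [hΔ, hrootlen]
    simp
  have key : ∀ ε ∈ children root, Δ (χ ε) = (-(G root)⁻¹) • (χ ε - μ ε • χ root) := by
    intro ε hε
    obtain ⟨hpar, hlen⟩ := hchild root ε hε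
    have ht0 : trunc ε 0 = root := by
      rw [htrunc, hlen, hrootlen]
      simp [hpar]
    have ht1 : trunc ε 1 = ε := by
      rw [htrunc, hlen, hrootlen]
      simp
    rw [hΔ, hlen, hrootlen]
    rw [Finset.sum_range_one, ht0, ht1, hμroot]
    module
  have h2 : ∀ ε ∈ children root, ∀ ε' ∈ children root,
      Δ ((μ ε)⁻¹ • χ ε - (μ ε')⁻¹ • χ ε') =
        (-(G root)⁻¹) • ((μ ε)⁻¹ • χ ε - (μ ε')⁻¹ • χ ε') := by
    intro ε hε ε' hε'
    have hne : μ ε ≠ 0 := (hμ ε).ne'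
    have hne' : μ ε' ≠ 0 := (hμ ε').ne'
    rw [map_sub, map_smul, map_smul, key ε hε, key ε' hε']
    match_scalars
    all_goals field_simp
    all_goals ring
  refine ⟨h1, h2, ?_⟩
  set S : Set M := {v : M | ∃ ε ∈ children root, ∃ ε' ∈ children root,
        ε ≠ ε' ∧ v = (μ ε)⁻¹ • χ ε - (μ ε')⁻¹ • χ ε'} with hSdef
  by_cases hcard : (children root).card ≤ 1
  · have hSe : S = (∅ : Set M) := by
      ext v
      simp only [Set.mem_empty_iff_false, iff_false]
      rintro ⟨ε, hε, ε', hε', hne, rfl⟩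
      exact absurd (Finset.one_lt_card.mpr ⟨ε, hε, ε', hε', hne⟩) (not_lt.mpr hcard)
    rw [hSe, Submodule.span_empty, finrank_bot]
    omega
  · push_neg at hcard
    obtain ⟨ε0, hε0⟩ := Finset.card_pos.mp (by omega : 0 < (children root).card)
    set f : ↥(children root) → M := fun c => (μ (c : P))⁻¹ • χ (c : P) with hfdef
    have hf : LinearIndependent ℝ f := by
      have h := (hind root).units_smul (fun c => Units.mk0 (μ (c : P))⁻¹ (inv_ne_zero (hμ _).ne'))
      convert h using 1
      exact funext fun c => rfl
    set e0 : ↥(children root) := ⟨ε0, hε0⟩ with he0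
    set g : {c : ↥(children root) // c ≠ e0} → M := fun c => f c - f e0 with hgdef
    have hg : LinearIndependent ℝ g := by
      rw [Fintype.linearIndependent_iff]
      intro a ha
      have key2 : ∀ i : ↥(children root),
          (if h : i = e0 then -(∑ c, a c) else a ⟨i, h⟩) = 0 := by
        apply Fintype.linearIndependent_iff.mp hf
        have hsplit : (∑ i, (if h : i = e0 then -(∑ c, a c) else a ⟨i, h⟩) • f i)
            = (-(∑ c, a c)) • f e0 +
              ∑ i ∈ ({e0}ᶜ : Finset _), (if h : i = e0 then -(∑ c, a c) else a ⟨i, h⟩) • f i := by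
          rw [Fintype.sum_eq_add_sum_compl e0]
          simp
        rw [hsplit]
        have hsub : (∑ i ∈ ({e0}ᶜ : Finset _),
            (if h : i = e0 then -(∑ c, a c) else a ⟨i, h⟩) • f i)
            = ∑ c : {c : ↥(children root) // c ≠ e0}, a c • f c := by
          rw [Finset.sum_subtype (p := fun c : ↥(children root) => c ≠ e0)
            ({e0}ᶜ : Finset _) (fun x => by simp)
            (fun i => (if h : i = e0 then -(∑ c, a c) else a ⟨i, h⟩) • f i)]
          apply Finset.sum_congr rfl
          intro c _
          rw [dif_neg c.2]
        rw [hsub]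
        have hha : (∑ c : {c : ↥(children root) // c ≠ e0}, a c • g c) = 0 := ha
        simp only [hgdef, smul_sub] at hha
        rw [Finset.sum_sub_distrib, ← Finset.sum_smul] at hha
        rw [neg_smul]
        linear_combination (norm := abel) hha
      intro c
      have := key2 c.1
      rwa [dif_neg c.2] at this
    have hspan : Submodule.span ℝ S = Submodule.span ℝ (Set.range g) := by
      apply le_antisymm
      · rw [Submodule.span_le]
        rintro v ⟨ε, hε, ε', hε', hne, rfl⟩
        have hmem : ∀ c : ↥(children root),
            f c - f e0 ∈ Submodule.span ℝ (Set.range g) := by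
          intro c
          by_cases h : c = e0
          · simp [h]
          · exact Submodule.subset_span ⟨⟨c, h⟩, rfl⟩
        have hv : (μ ε)⁻¹ • χ ε - (μ ε')⁻¹ • χ ε'
            = (f ⟨ε, hε⟩ - f e0) - (f ⟨ε', hε'⟩ - f e0) := by
          simp only [hfdef]
          abel
        rw [hv]
        exact Submodule.sub_mem _ (hmem _) (hmem _)
      · rw [Submodule.span_le]
        rintro v ⟨c, rfl⟩
        by_cases h : (c.1 : P) = ε0
        · exact absurd (Subtype.ext h) c.2
        · exact Submodule.subset_span ⟨c.1.1, c.1.2, ε0, hε0, h, rfl⟩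
    rw [hspan, finrank_span_eq_card hg]
    have : Fintype.card {c : ↥(children root) // c ≠ e0}
        = (children root).card - 1 := by
      rw [Fintype.card_subtype_compl, Fintype.card_subtype_eq, Fintype.card_coe]
    exact this
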